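/- In a stochastic BPA game with simple target set T, the complement winning region satisfies W_Diamond(T,=0) = (B\A)* ∪ (B\A)*(Γ\B)Γ*, where A = W_Box(T,>0) ∩ Γ and B = W_Box(T_ε,>0) ∩ Γ. -/

import Mathlib

open scoped Classical

/-- A stochastic BPA game: finite stack alphabet `Γ`, rules `X → α` with
`|α| ≤ 2`, symbols partitioned among player Box, player Diamond, and
probabilistic symbols, the latter carrying positive rational distributions
over their rules. -/
structure BPA (Γ : Type*) [Fintype Γ] where
  rule : Γ → List Γ → Prop
  rule_len : ∀ X α, rule X α → α.length ≤ 2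
  rule_total : ∀ X, ∃ α, rule X α
  isBox : Γ → Prop
  isDiamond : Γ → Prop
  isCirc : Γ → Prop
  cover : ∀ X, isBox X ∨ isDiamond X ∨ isCirc X
  disjBD : ∀ X, ¬ (isBox X ∧ isDiamond X)
  disjBC : ∀ X, ¬ (isBox X ∧ isCirc X)
  disjDC : ∀ X, ¬ (isDiamond X ∧ isCirc X)
  prob : Γ → List Γ → ℝ
  prob_nonneg : ∀ X α, 0 ≤ prob X α
  prob_rat : ∀ X α, ∃ q : ℚ, prob X α = (q : ℝ)
  prob_supp : ∀ X α, isCirc X → (0 < prob X α ↔ rule X α)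
  prob_sum : ∀ X, isCirc X → ∑' α, prob X α = 1

variable {Γ : Type*} [Fintype Γ]

/-- A history-dependent randomized strategy for the player owning the symbols
satisfying `own` in the stochastic game induced by a BPA game: to every history
(sequence of configurations) and current configuration `X :: β` with `own X`,
it assigns a probability distribution on the applicable rules. -/
structure BPA.Strat (Δ : BPA Γ) (own : Γ → Prop) where
  f : List (List Γ) → List Γ → List Γ → ℝ
  nonneg : ∀ w c α, 0 ≤ f w c α
  supp : ∀ w X β α, own X → f w (X :: β) α ≠ 0 → Δ.rule X α
  sum_one : ∀ w X β, own X → ∑' α, f w (X :: β) α = 1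

/-- The distribution on rules chosen at configuration `c` after history `w`. -/
noncomputable def BPA.choice (Δ : BPA Γ) (σ : Δ.Strat Δ.isBox)
    (π : Δ.Strat Δ.isDiamond) (w : List (List Γ)) (c : List Γ) (α : List Γ) : ℝ :=
  match c with
  | [] => 0
  | X :: _ => if Δ.isBox X then σ.f w c α else if Δ.isDiamond X then π.f w c α
      else Δ.prob X α

/-- One-step transition probability between configurations in the play
induced by a BPA game (the empty configuration `ε` loops with probability 1,
and `X :: β` moves to `α ++ β` for a rule `X → α`). -/
noncomputable def BPA.stepP (Δ : BPA Γ) (σ : Δ.Strat Δ.isBox)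
    (π : Δ.Strat Δ.isDiamond) (w : List (List Γ)) (c c' : List Γ) : ℝ :=
  match c with
  | [] => if c' = [] then 1 else 0
  | X :: β => ∑' α : List Γ,
      if α ++ β = c' ∧ Δ.rule X α then Δ.choice σ π w (X :: β) α else 0

/-- Probability of reaching `T` from configuration `c` within at most `n`
transitions, after history `w`. -/
noncomputable def BPA.reachN (Δ : BPA Γ) (σ : Δ.Strat Δ.isBox)
    (π : Δ.Strat Δ.isDiamond) (T : Set (List Γ)) :
    ℕ → List (List Γ) → List Γ → ℝ
  | 0, _, c => if c ∈ T then 1 else 0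
  | n+1, w, c => if c ∈ T then 1 else
      ∑' c', Δ.stepP σ π w c c' * BPA.reachN Δ σ π T n (w ++ [c]) c'

/-- Probability `P_c^{σ,π}(Reach(T))` of reaching `T` from configuration `c`. -/
noncomputable def BPA.reachP (Δ : BPA Γ) (σ : Δ.Strat Δ.isBox)
    (π : Δ.Strat Δ.isDiamond) (T : Set (List Γ)) (c : List Γ) : ℝ :=
  ⨆ n, Δ.reachN σ π T n [] c

/-- The winning region `W_Box(T, >0)`. -/
def BPA.WBoxPos (Δ : BPA Γ) (T : Set (List Γ)) : Set (List Γ) :=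
  {c | ∃ σ : Δ.Strat Δ.isBox, ∀ π : Δ.Strat Δ.isDiamond, 0 < Δ.reachP σ π T c}

/-- The winning region `W_Box(T, =1)`. -/
def BPA.WBoxOne (Δ : BPA Γ) (T : Set (List Γ)) : Set (List Γ) :=
  {c | ∃ σ : Δ.Strat Δ.isBox, ∀ π : Δ.Strat Δ.isDiamond, Δ.reachP σ π T c = 1}

/-- The winning region `W_Diamond(T, =0)`. -/
def BPA.WDiaZero (Δ : BPA Γ) (T : Set (List Γ)) : Set (List Γ) :=
  {c | ∃ π : Δ.Strat Δ.isDiamond, ∀ σ : Δ.Strat Δ.isBox, Δ.reachP σ π T c = 0}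

/-- The winning region `W_Diamond(T, <1)`. -/
def BPA.WDiaLtOne (Δ : BPA Γ) (T : Set (List Γ)) : Set (List Γ) :=
  {c | ∃ π : Δ.Strat Δ.isDiamond, ∀ σ : Δ.Strat Δ.isBox, Δ.reachP σ π T c < 1}

/-- The language `{[X] : X ∈ S}` of one-letter words over a set of symbols. -/
def symLang (S : Set Γ) : Language Γ := {c | ∃ X ∈ S, c = [X]}

/-- The simple set of target configurations `S·Γ*` determined by the set of
symbols `S`: membership depends only on the top stack symbol, and `ε ∉ S·Γ*`. -/
def topLang (S : Set Γ) : Language Γ := {c | ∃ X β, c = X :: β ∧ X ∈ S}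
namespace BPA

variable {Γ : Type*} [Fintype Γ] (Δ : BPA Γ)

/-- a chosen rule for each symbol -/
noncomputable def pick (X : Γ) : List Γ := (Δ.rule_total X).choose

lemma pick_rule (X : Γ) : Δ.rule X (Δ.pick X) := (Δ.rule_total X).choose_spec

/-- default (deterministic) strategy -/
noncomputable def dflt (own : Γ → Prop) : Δ.Strat own where
  f := fun _ c α => match c with
    | [] => 0
    | X :: _ => if α = Δ.pick X then 1 else 0
  nonneg := by
    intro w c α; cases c with
    | nil => exact le_refl 0
    | cons X β => dsimp only; split <;> norm_num
  supp := by
    intro w X β α _ h0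
    dsimp only at h0
    by_cases h : α = Δ.pick X
    · subst h; exact Δ.pick_rule X
    · simp [h] at h0
  sum_one := by
    intro w X β _
    dsimp only
    exact tsum_ite_eq (Δ.pick X) (fun _ => (1 : ℝ))

/-- the finitely many rules of a symbol, as a Finset -/
noncomputable def RS (X : Γ) : Finset (List Γ) :=
  (Set.Finite.subset (List.finite_length_le Γ 2) (fun α hα => Δ.rule_len X α hα)).toFinset

lemma mem_RS {X : Γ} {α : List Γ} : α ∈ Δ.RS X ↔ Δ.rule X α := Set.Finite.mem_toFinset _

variable {σ : Δ.Strat Δ.isBox} {π : Δ.Strat Δ.isDiamond} {T : Set (List Γ)}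

lemma choice_nonneg (σ : Δ.Strat Δ.isBox) (π : Δ.Strat Δ.isDiamond)
    (w : List (List Γ)) (c : List Γ) (α : List Γ) : 0 ≤ Δ.choice σ π w c α := by
  cases c with
  | nil => exact le_refl 0
  | cons X β =>
    simp only [BPA.choice]
    split_ifs
    · exact σ.nonneg _ _ _
    · exact π.nonneg _ _ _
    · exact Δ.prob_nonneg _ _

lemma choice_eq_zero {X : Γ} {α : List Γ} (h : ¬ Δ.rule X α)
    (σ : Δ.Strat Δ.isBox) (π : Δ.Strat Δ.isDiamond) (w : List (List Γ)) (β : List Γ) :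
    Δ.choice σ π w (X :: β) α = 0 := by
  simp only [BPA.choice]
  split_ifs with h1 h2
  · by_contra h0; exact h (σ.supp _ _ _ _ h1 h0)
  · by_contra h0; exact h (π.supp _ _ _ _ h2 h0)
  · have hc : Δ.isCirc X := by
      rcases Δ.cover X with h' | h' | h'
      · exact absurd h' h1
      · exact absurd h' h2
      · exact h'
    by_contra h0
    exact h ((Δ.prob_supp X α hc).mp (lt_of_le_of_ne (Δ.prob_nonneg X α) (Ne.symm h0)))

lemma choice_summable (σ : Δ.Strat Δ.isBox) (π : Δ.Strat Δ.isDiamond)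
    (w : List (List Γ)) (X : Γ) (β : List Γ) :
    Summable (Δ.choice σ π w (X :: β)) :=
  summable_of_ne_finset_zero (s := Δ.RS X)
    (fun α hα => Δ.choice_eq_zero (fun hr => hα ((Δ.mem_RS).mpr hr)) σ π w β)

lemma choice_tsum_one (σ : Δ.Strat Δ.isBox) (π : Δ.Strat Δ.isDiamond)
    (w : List (List Γ)) (X : Γ) (β : List Γ) :
    ∑' α, Δ.choice σ π w (X :: β) α = 1 := by
  by_cases h1 : Δ.isBox X
  · have h : ∀ α, Δ.choice σ π w (X :: β) α = σ.f w (X :: β) α :=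
      fun α => by simp only [BPA.choice, if_pos h1]
    rw [tsum_congr h]
    exact σ.sum_one w X β h1
  · by_cases h2 : Δ.isDiamond X
    · have h : ∀ α, Δ.choice σ π w (X :: β) α = π.f w (X :: β) α :=
        fun α => by simp only [BPA.choice, if_neg h1, if_pos h2]
      rw [tsum_congr h]
      exact π.sum_one w X β h2
    · have hc : Δ.isCirc X := by
        rcases Δ.cover X with h' | h' | h'
        · exact absurd h' h1
        · exact absurd h' h2
        · exact h'
      have h : ∀ α, Δ.choice σ π w (X :: β) α = Δ.prob X α :=
        fun α => by simp only [BPA.choice, if_neg h1, if_neg h2]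
      rw [tsum_congr h]
      exact Δ.prob_sum X hc

lemma stepP_nonneg (w : List (List Γ)) (c c' : List Γ) : 0 ≤ Δ.stepP σ π w c c' := by
  cases c with
  | nil => simp only [BPA.stepP]; split <;> norm_num
  | cons X β =>
    simp only [BPA.stepP]
    refine tsum_nonneg (fun α => ?_)
    split
    · exact Δ.choice_nonneg σ π w _ α
    · exact le_refl 0

lemma stepP_eq_zero {X : Γ} {β c' : List Γ} (h : ∀ α, Δ.rule X α → α ++ β ≠ c')
    (w : List (List Γ)) : Δ.stepP σ π w (X :: β) c' = 0 := by
  simp only [BPA.stepP]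
  rw [tsum_congr (fun α => ?_), tsum_zero]
  split_ifs with h'
  · exact absurd h'.1 (h α h'.2)
  · rfl

lemma stepP_append {X : Γ} {β : List Γ} (α : List Γ) (h : Δ.rule X α)
    (w : List (List Γ)) : Δ.stepP σ π w (X :: β) (α ++ β) = Δ.choice σ π w (X :: β) α := by
  simp only [BPA.stepP]
  rw [tsum_eq_single α]
  · rw [if_pos ⟨rfl, h⟩]
  · intro α' hne
    split_ifs with h'
    · exact absurd (List.append_left_injective β h'.1) hne
    · rfl

lemma reachN_succ {X : Γ} {β : List Γ} (hT : (X :: β) ∉ T) (n : ℕ) (w : List (List Γ)) :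
    Δ.reachN σ π T (n+1) w (X :: β)
      = ∑ α ∈ Δ.RS X, Δ.choice σ π w (X :: β) α * Δ.reachN σ π T n (w ++ [X :: β]) (α ++ β) := by
  simp only [BPA.reachN, if_neg hT]
  rw [tsum_eq_sum (s := (Δ.RS X).image (· ++ β)) ?_]
  · rw [Finset.sum_image ?_]
    · exact Finset.sum_congr rfl fun α hα => by rw [Δ.stepP_append α ((Δ.mem_RS).mp hα)]
    · intro a _ b _ hab; exact List.append_left_injective β hab
  · intro c' hc'
    rw [Δ.stepP_eq_zero (fun α hr he => hc' (Finset.mem_image.mpr ⟨α, (Δ.mem_RS).mpr hr, he⟩)),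
      zero_mul]

lemma reachN_nonneg (n : ℕ) (w : List (List Γ)) (c : List Γ) :
    0 ≤ Δ.reachN σ π T n w c := by
  induction n generalizing w c with
  | zero => simp only [BPA.reachN]; split <;> norm_num
  | succ n ih =>
    simp only [BPA.reachN]
    split
    · norm_num
    · exact tsum_nonneg fun c' => mul_nonneg (Δ.stepP_nonneg _ _ _) (ih _ _)

lemma reachN_nil (n : ℕ) (w : List (List Γ)) :
    Δ.reachN σ π T n w [] = if ([] : List Γ) ∈ T then 1 else 0 := by
  induction n generalizing w with
  | zero => rfl
  | succ n ih =>
    simp only [BPA.reachN]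
    split_ifs with h
    · rfl
    · rw [tsum_eq_single ([] : List Γ)]
      · simp [BPA.stepP, ih, h]
      · intro c' hne
        simp only [BPA.stepP, if_neg hne, zero_mul]

lemma reachN_le_one (n : ℕ) (w : List (List Γ)) (c : List Γ) :
    Δ.reachN σ π T n w c ≤ 1 := by
  induction n generalizing w c with
  | zero => simp only [BPA.reachN]; split <;> norm_num
  | succ n ih =>
    cases c with
    | nil => rw [Δ.reachN_nil]; split <;> norm_num
    | cons X β =>
      by_cases hT : (X :: β) ∈ T
      · simp only [BPA.reachN, if_pos hT, le_refl]
      · rw [Δ.reachN_succ hT]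
        calc ∑ α ∈ Δ.RS X, Δ.choice σ π w (X :: β) α * Δ.reachN σ π T n (w ++ [X :: β]) (α ++ β)
            ≤ ∑ α ∈ Δ.RS X, Δ.choice σ π w (X :: β) α := by
              refine Finset.sum_le_sum fun α _ => ?_
              exact mul_le_of_le_one_right (Δ.choice_nonneg σ π w _ α) (ih _ _)
          _ ≤ ∑' α, Δ.choice σ π w (X :: β) α := by
              exact Summable.sum_le_tsum _ (fun α _ => Δ.choice_nonneg σ π w _ α)
                (Δ.choice_summable σ π w X β)
          _ = 1 := Δ.choice_tsum_one σ π w X β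

lemma le_reachN_succ {X : Γ} {β α : List Γ} (h : Δ.rule X α) (hT : (X :: β) ∉ T)
    (n : ℕ) (w : List (List Γ)) :
    Δ.choice σ π w (X :: β) α * Δ.reachN σ π T n (w ++ [X :: β]) (α ++ β)
      ≤ Δ.reachN σ π T (n+1) w (X :: β) := by
  rw [Δ.reachN_succ hT]
  exact Finset.single_le_sum
    (f := fun α' => Δ.choice σ π w (X :: β) α' * Δ.reachN σ π T n (w ++ [X :: β]) (α' ++ β))
    (fun α' _ => mul_nonneg (Δ.choice_nonneg σ π w _ α') (Δ.reachN_nonneg _ _ _))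
    ((Δ.mem_RS).mpr h)

lemma allZero_step {X : Γ} {β α : List Γ} {w : List (List Γ)} (hT : (X :: β) ∉ T)
    (hpos : 0 < Δ.choice σ π w (X :: β) α)
    (hz : ∀ m, Δ.reachN σ π T m w (X :: β) = 0) :
    ∀ m, Δ.reachN σ π T m (w ++ [X :: β]) (α ++ β) = 0 := by
  have hrule : Δ.rule X α := by
    by_contra h
    rw [Δ.choice_eq_zero h] at hpos
    exact lt_irrefl 0 hpos
  intro m
  have h1 := Δ.le_reachN_succ (σ := σ) (π := π) hrule hT m w
  rw [hz (m+1)] at h1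
  have h0 : 0 ≤ Δ.choice σ π w (X :: β) α * Δ.reachN σ π T m (w ++ [X :: β]) (α ++ β) :=
    mul_nonneg hpos.le (Δ.reachN_nonneg _ _ _)
  have := le_antisymm h1 h0
  rcases mul_eq_zero.mp this with h | h
  · exact absurd h hpos.ne'
  · exact h

end BPA
namespace BPA

variable {Γ : Type*} [Fintype Γ] (Δ : BPA Γ)

variable {σ : Δ.Strat Δ.isBox} {π : Δ.Strat Δ.isDiamond} {T : Set (List Γ)}

lemma reachP_bdd (σ : Δ.Strat Δ.isBox) (π : Δ.Strat Δ.isDiamond) (T : Set (List Γ))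
    (c : List Γ) : BddAbove (Set.range fun n => Δ.reachN σ π T n [] c) :=
  ⟨1, by rintro x ⟨n, rfl⟩; exact Δ.reachN_le_one n [] c⟩

lemma reachP_nonneg (σ : Δ.Strat Δ.isBox) (π : Δ.Strat Δ.isDiamond) (T : Set (List Γ))
    (c : List Γ) : 0 ≤ Δ.reachP σ π T c :=
  le_trans (Δ.reachN_nonneg 0 [] c) (le_ciSup (Δ.reachP_bdd σ π T c) 0)

lemma reachP_eq_zero_iff (σ : Δ.Strat Δ.isBox) (π : Δ.Strat Δ.isDiamond) (T : Set (List Γ))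
    (c : List Γ) : Δ.reachP σ π T c = 0 ↔ ∀ n, Δ.reachN σ π T n [] c = 0 := by
  constructor
  · intro h n
    exact le_antisymm (h ▸ le_ciSup (Δ.reachP_bdd σ π T c) n) (Δ.reachN_nonneg n [] c)
  · intro h
    have : Δ.reachP σ π T c = ⨆ _ : ℕ, (0 : ℝ) := iSup_congr h
    rw [this, ciSup_const]

/-- strip a fixed suffix `γ` off the configurations: turn a strategy for plays
over `c ++ γ` into a strategy for plays over `c`. -/
noncomputable def stripS {own : Γ → Prop} (τ : Δ.Strat own) (γ : List Γ) : Δ.Strat own where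
  f w c α := τ.f (w.map (· ++ γ)) (c ++ γ) α
  nonneg w c α := τ.nonneg _ _ _
  supp w X β α h h0 := τ.supp _ X (β ++ γ) α h h0
  sum_one w X β h := τ.sum_one _ X (β ++ γ) h

/-- remove the suffix `γ` from a configuration. -/
def sstrip (γ l : List Γ) : List Γ := l.take (l.length - γ.length)

lemma sstrip_append (γ c : List Γ) : sstrip γ (c ++ γ) = c := by
  rw [sstrip, List.length_append, Nat.add_sub_cancel, List.take_left]

lemma sstrip_cons {γ : List Γ} {X : Γ} {β : List Γ} (h : γ.length < (X :: β).length) :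
    sstrip γ (X :: β) = X :: β.take (β.length - γ.length) := by
  rw [sstrip]
  have h1 : (X :: β).length - γ.length = (β.length - γ.length) + 1 := by
    simp only [List.length_cons] at h ⊢; omega
  rw [h1, List.take_succ_cons]

lemma map_sstrip (γ : List Γ) (w : List (List Γ)) :
    (w.map (· ++ γ)).map (sstrip γ) = w := by
  induction w with
  | nil => rfl
  | cons e r ih => simp only [List.map_cons, sstrip_append, ih]

/-- lift a strategy for plays over `c` to a strategy for plays over `c ++ γ`,
by stripping `γ` (as long as the stack is strictly higher than `γ`). -/
noncomputable def liftS {own : Γ → Prop} (τ : Δ.Strat own) (γ : List Γ) : Δ.Strat own where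
  f w c α := if γ.length < c.length ∧ γ <:+ c then
      τ.f (w.map (sstrip γ)) (sstrip γ c) α
    else (Δ.dflt own).f w c α
  nonneg w c α := by
    split
    · exact τ.nonneg _ _ _
    · exact (Δ.dflt own).nonneg _ _ _
  supp w X β α h h0 := by
    split at h0
    · next hc =>
        rw [sstrip_cons hc.1] at h0
        exact τ.supp _ X _ α h h0
    · exact (Δ.dflt own).supp w X β α h h0
  sum_one w X β h := by
    by_cases hc : γ.length < (X :: β).length ∧ γ <:+ (X :: β)
    · simp only [if_pos hc, sstrip_cons hc.1]
      exact τ.sum_one _ X _ h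
    · simp only [if_neg hc]
      exact (Δ.dflt own).sum_one w X β h

/-- the suffix of the history starting at the first occurrence of `γ`, if any. -/
noncomputable def ph (γ : List Γ) : List (List Γ) → Option (List (List Γ))
  | [] => none
  | e :: r => if e = γ then some (e :: r) else ph γ r

lemma ph_none {γ : List Γ} {W : List (List Γ)} (h : ∀ e ∈ W, e ≠ γ) : ph γ W = none := by
  induction W with
  | nil => rfl
  | cons e r ih =>
    simp only [ph]
    rw [if_neg (h e List.mem_cons_self)]
    exact ih fun e' he' => h e' (List.mem_cons_of_mem e he')

lemma ph_first {γ : List Γ} {W0 : List (List Γ)} (h : ∀ e ∈ W0, e ≠ γ) (t : List (List Γ)) :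
    ph γ (W0 ++ γ :: t) = some (γ :: t) := by
  induction W0 with
  | nil => simp [ph]
  | cons e r ih =>
    rw [List.cons_append]
    simp only [ph]
    rw [if_neg (h e List.mem_cons_self)]
    exact ih fun e' he' => h e' (List.mem_cons_of_mem e he')

/-- play `τ1` (lifted above the stack suffix `γ`) until the stack first equals
`γ`, then play `τ2` afresh. -/
noncomputable def combS {own : Γ → Prop} (τ1 τ2 : Δ.Strat own) (γ : List Γ) : Δ.Strat own where
  f w c α := match ph γ w with
    | some w2 => τ2.f w2 c α
    | none => if c = γ then τ2.f [] c α else (Δ.liftS τ1 γ).f w c α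
  nonneg w c α := by
    rcases hw : ph γ w with _ | w2
    · dsimp only; split
      · exact τ2.nonneg _ _ _
      · exact (Δ.liftS τ1 γ).nonneg _ _ _
    · exact τ2.nonneg _ _ _
  supp w X β α h h0 := by
    rcases hw : ph γ w with _ | w2 <;> rw [hw] at h0
    · dsimp only at h0; split at h0
      · exact τ2.supp _ X β α h h0
      · exact (Δ.liftS τ1 γ).supp w X β α h h0
    · exact τ2.supp _ X β α h h0
  sum_one w X β h := by
    rcases hw : ph γ w with _ | w2 <;> simp only [hw]
    · split
      · exact τ2.sum_one _ X β h
      · exact (Δ.liftS τ1 γ).sum_one w X β h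
    · exact τ2.sum_one _ X β h

/-- prepend a fixed history `w0`. -/
noncomputable def shiftS {own : Γ → Prop} (τ : Δ.Strat own) (w0 : List (List Γ)) :
    Δ.Strat own where
  f w c α := τ.f (w0 ++ w) c α
  nonneg w c α := τ.nonneg _ _ _
  supp w X β α h h0 := τ.supp _ X β α h h0
  sum_one w X β h := τ.sum_one _ X β h

/-- two pairs of strategies that agree along related histories induce the same
bounded reachability probabilities. -/
lemma reachN_agree (σ1 σ2 : Δ.Strat Δ.isBox) (π1 π2 : Δ.Strat Δ.isDiamond)
    (T : Set (List Γ)) (R : List (List Γ) → List (List Γ) → List Γ → Prop)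
    (hf : ∀ w1 w2 c, R w1 w2 c → ∀ α, Δ.choice σ1 π1 w1 c α = Δ.choice σ2 π2 w2 c α)
    (hstep : ∀ w1 w2 c c', R w1 w2 c → R (w1 ++ [c]) (w2 ++ [c]) c') :
    ∀ n w1 w2 c, R w1 w2 c → Δ.reachN σ1 π1 T n w1 c = Δ.reachN σ2 π2 T n w2 c := by
  intro n
  induction n with
  | zero => intro w1 w2 c _; rfl
  | succ n ih =>
    intro w1 w2 c hR
    cases c with
    | nil => rw [Δ.reachN_nil, Δ.reachN_nil]
    | cons X β =>
      by_cases hT : (X :: β) ∈ T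
      · simp only [BPA.reachN, if_pos hT]
      · rw [Δ.reachN_succ hT, Δ.reachN_succ hT]
        refine Finset.sum_congr rfl fun α _ => ?_
        rw [hf _ _ _ hR α, ih _ _ _ (hstep _ _ _ (α ++ β) hR)]

end BPA
namespace BPA

variable {Γ : Type*} [Fintype Γ] (Δ : BPA Γ)

omit [Fintype Γ] in
lemma topLang_cons {S : Set Γ} {X : Γ} {β : List Γ} : (X :: β) ∈ topLang S ↔ X ∈ S := by
  constructor
  · rintro ⟨Y, δ, h, hY⟩
    obtain ⟨rfl, rfl⟩ := List.cons.inj h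
    exact hY
  · intro h; exact ⟨X, β, rfl, h⟩

omit [Fintype Γ] in
lemma topLang_nil {S : Set Γ} : ([] : List Γ) ∉ topLang S := by
  rintro ⟨Y, δ, h, -⟩
  exact absurd h.symm (List.cons_ne_nil Y δ)

omit [Fintype Γ] in
lemma topLang_append {S : Set Γ} {c : List Γ} (hc : c ≠ []) (γ : List Γ) :
    c ++ γ ∈ topLang S ↔ c ∈ topLang S := by
  cases c with
  | nil => exact absurd rfl hc
  | cons X β => rw [List.cons_append, topLang_cons, topLang_cons]

omit [Fintype Γ] in
lemma append_ne {c : List Γ} (hc : c ≠ []) (γ : List Γ) : c ++ γ ≠ γ := by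
  intro h
  have := congrArg List.length h
  rw [List.length_append] at this
  exact hc (List.eq_nil_of_length_eq_zero (by omega))

omit [Fintype Γ] in
lemma mem_Tek {S : Set Γ} {X : Γ} {β : List Γ} :
    (X :: β) ∈ (topLang S ∪ {([] : List Γ)} : Set (List Γ)) ↔ (X :: β) ∈ topLang S := by
  constructor
  · rintro (h | h)
    · exact h
    · exact absurd h (List.cons_ne_nil X β)
  · exact Or.inl

lemma not_mem_of_reachN_zero {σ : Δ.Strat Δ.isBox} {π : Δ.Strat Δ.isDiamond}
    {T : Set (List Γ)} {w : List (List Γ)} {c : List Γ}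
    (h : Δ.reachN σ π T 0 w c = 0) : c ∉ T := by
  intro hT
  simp only [BPA.reachN, if_pos hT] at h
  norm_num at h

lemma choice_agree (σ1 σ2 : Δ.Strat Δ.isBox) (π1 π2 : Δ.Strat Δ.isDiamond)
    (w1 w2 : List (List Γ)) (X : Γ) (β1 β2 : List Γ)
    (hσ : ∀ α, σ1.f w1 (X :: β1) α = σ2.f w2 (X :: β2) α)
    (hπ : ∀ α, π1.f w1 (X :: β1) α = π2.f w2 (X :: β2) α) (α : List Γ) :
    Δ.choice σ1 π1 w1 (X :: β1) α = Δ.choice σ2 π2 w2 (X :: β2) α := by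
  simp only [BPA.choice]
  split_ifs with h1 h2
  · exact hσ α
  · exact hπ α
  · rfl

lemma liftS_f_eq {own : Γ → Prop} (τ : Δ.Strat own) (γ : List Γ)
    (w : List (List Γ)) {c : List Γ} (hc : c ≠ []) (α : List Γ) :
    (Δ.liftS τ γ).f (w.map (· ++ γ)) (c ++ γ) α = τ.f w c α := by
  have h1 : γ.length < (c ++ γ).length := by
    rw [List.length_append]
    have := List.length_pos_iff.mpr hc
    omega
  show (if _ then _ else _) = _
  rw [if_pos ⟨h1, List.suffix_append c γ⟩, map_sstrip, sstrip_append]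

omit [Fintype Γ] in
lemma map_entries_ne {γ : List Γ} {w : List (List Γ)}
    (hw : ∀ e ∈ w, e ≠ ([] : List Γ)) : ∀ e ∈ w.map (· ++ γ), e ≠ γ := by
  intro e he
  obtain ⟨a, ha, rfl⟩ := List.mem_map.mp he
  exact append_ne (hw a ha) γ

lemma combS_f_phase1 {own : Γ → Prop} (τ1 τ2 : Δ.Strat own) (γ : List Γ)
    {w : List (List Γ)} {c : List Γ} (hw : ∀ e ∈ w, e ≠ ([] : List Γ)) (hc : c ≠ [])
    (α : List Γ) :
    (Δ.combS τ1 τ2 γ).f (w.map (· ++ γ)) (c ++ γ) α = τ1.f w c α := by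
  show (match ph γ (w.map (· ++ γ)) with
    | some w2 => τ2.f w2 (c ++ γ) α
    | none => if c ++ γ = γ then τ2.f [] (c ++ γ) α else (Δ.liftS τ1 γ).f (w.map (· ++ γ)) (c ++ γ) α) = _
  rw [ph_none (map_entries_ne hw)]
  dsimp only
  rw [if_neg (append_ne hc γ)]
  exact Δ.liftS_f_eq τ1 γ w hc α

lemma comb_phase2_dia (π1 π2 : Δ.Strat Δ.isDiamond) (γ : List Γ) (σ' : Δ.Strat Δ.isBox)
    (T : Set (List Γ)) (n : ℕ) (W0 : List (List Γ)) (hW0 : ∀ e ∈ W0, e ≠ γ) :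
    Δ.reachN σ' (Δ.combS π1 π2 γ) T n W0 γ = Δ.reachN (Δ.shiftS σ' W0) π2 T n [] γ := by
  refine Δ.reachN_agree _ _ _ _ T
    (fun w1 w2 c => w1 = W0 ++ w2 ∧ ((w2 = [] ∧ c = γ) ∨ ∃ t, w2 = γ :: t)) ?_ ?_
    n W0 [] γ ⟨(List.append_nil W0).symm, Or.inl ⟨rfl, rfl⟩⟩
  · rintro w1 w2 c ⟨rfl, hcase⟩ α
    cases c with
    | nil => rfl
    | cons Y δ =>
      refine Δ.choice_agree σ' (Δ.shiftS σ' W0) (Δ.combS π1 π2 γ) π2 (W0 ++ w2) w2 Y δ δ (fun _ => rfl) (fun α' => ?_) α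
      rcases hcase with ⟨rfl, hcγ⟩ | ⟨t, rfl⟩
      · show (match ph γ (W0 ++ []) with
          | some w2 => π2.f w2 (Y :: δ) α'
          | none => if (Y :: δ) = γ then π2.f [] (Y :: δ) α'
              else (Δ.liftS π1 γ).f (W0 ++ []) (Y :: δ) α') = _
        rw [List.append_nil, ph_none hW0]
        dsimp only
        rw [if_pos hcγ]
      · show (match ph γ (W0 ++ γ :: t) with
          | some w2 => π2.f w2 (Y :: δ) α'
          | none => if (Y :: δ) = γ then π2.f [] (Y :: δ) α'
              else (Δ.liftS π1 γ).f (W0 ++ γ :: t) (Y :: δ) α') = _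
        rw [ph_first hW0 t]
  · rintro w1 w2 c c' ⟨rfl, hcase⟩
    refine ⟨List.append_assoc W0 w2 [c], Or.inr ?_⟩
    rcases hcase with ⟨rfl, rfl⟩ | ⟨t, rfl⟩
    · exact ⟨[], rfl⟩
    · exact ⟨t ++ [c], rfl⟩

lemma comb_phase2_box (σ1 σ2 : Δ.Strat Δ.isBox) (γ : List Γ) (π' : Δ.Strat Δ.isDiamond)
    (T : Set (List Γ)) (n : ℕ) (W0 : List (List Γ)) (hW0 : ∀ e ∈ W0, e ≠ γ) :
    Δ.reachN (Δ.combS σ1 σ2 γ) π' T n W0 γ = Δ.reachN σ2 (Δ.shiftS π' W0) T n [] γ := by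
  refine Δ.reachN_agree _ _ _ _ T
    (fun w1 w2 c => w1 = W0 ++ w2 ∧ ((w2 = [] ∧ c = γ) ∨ ∃ t, w2 = γ :: t)) ?_ ?_
    n W0 [] γ ⟨(List.append_nil W0).symm, Or.inl ⟨rfl, rfl⟩⟩
  · rintro w1 w2 c ⟨rfl, hcase⟩ α
    cases c with
    | nil => rfl
    | cons Y δ =>
      refine Δ.choice_agree (Δ.combS σ1 σ2 γ) σ2 π' (Δ.shiftS π' W0) (W0 ++ w2) w2 Y δ δ (fun α' => ?_) (fun _ => rfl) α
      rcases hcase with ⟨rfl, hcγ⟩ | ⟨t, rfl⟩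
      · show (match ph γ (W0 ++ []) with
          | some w2 => σ2.f w2 (Y :: δ) α'
          | none => if (Y :: δ) = γ then σ2.f [] (Y :: δ) α'
              else (Δ.liftS σ1 γ).f (W0 ++ []) (Y :: δ) α') = _
        rw [List.append_nil, ph_none hW0]
        dsimp only
        rw [if_pos hcγ]
      · show (match ph γ (W0 ++ γ :: t) with
          | some w2 => σ2.f w2 (Y :: δ) α'
          | none => if (Y :: δ) = γ then σ2.f [] (Y :: δ) α'
              else (Δ.liftS σ1 γ).f (W0 ++ γ :: t) (Y :: δ) α') = _
        rw [ph_first hW0 t]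
  · rintro w1 w2 c c' ⟨rfl, hcase⟩
    refine ⟨List.append_assoc W0 w2 [c], Or.inr ?_⟩
    rcases hcase with ⟨rfl, rfl⟩ | ⟨t, rfl⟩
    · exact ⟨[], rfl⟩
    · exact ⟨t ++ [c], rfl⟩

lemma comb_dia_zero (ΓT : Set Γ) (σ' : Δ.Strat Δ.isBox) (π1 π2 : Δ.Strat Δ.isDiamond)
    (γ : List Γ) (hπ2 : ∀ σ, Δ.reachP σ π2 (topLang ΓT) γ = 0)
    (n : ℕ) (W0 : List (List Γ)) (hW0 : ∀ e ∈ W0, e ≠ γ) :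
    Δ.reachN σ' (Δ.combS π1 π2 γ) (topLang ΓT) n W0 γ = 0 := by
  rw [Δ.comb_phase2_dia π1 π2 γ σ' (topLang ΓT) n W0 hW0]
  exact (Δ.reachP_eq_zero_iff _ _ _ _).mp (hπ2 _) n

lemma comb_box_ex (ΓT : Set Γ) (σ1 σ2 : Δ.Strat Δ.isBox) (π' : Δ.Strat Δ.isDiamond)
    (γ : List Γ) (hσ2 : ∀ π, 0 < Δ.reachP σ2 π (topLang ΓT) γ)
    (W0 : List (List Γ)) (hW0 : ∀ e ∈ W0, e ≠ γ) :
    ∃ m, Δ.reachN (Δ.combS σ1 σ2 γ) π' (topLang ΓT) m W0 γ ≠ 0 := by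
  by_contra h
  push_neg at h
  have h2 : ∀ m, Δ.reachN σ2 (Δ.shiftS π' W0) (topLang ΓT) m [] γ = 0 := fun m => by
    rw [← Δ.comb_phase2_box σ1 σ2 γ π' (topLang ΓT) m W0 hW0]
    exact h m
  have := hσ2 (Δ.shiftS π' W0)
  rw [(Δ.reachP_eq_zero_iff _ _ _ _).mpr h2] at this
  exact lt_irrefl 0 this

end BPA
namespace BPA

variable {Γ : Type*} [Fintype Γ] (Δ : BPA Γ)

/-- Core phase-1 induction for composing Diamond strategies: if the stripped
play from `c` is surely-avoiding, so is the combined play from `c ++ γ`. -/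
lemma C1 (ΓT : Set Γ) (σ' : Δ.Strat Δ.isBox) (π1 π2 : Δ.Strat Δ.isDiamond) (γ : List Γ)
    (hπ2 : ∀ σ, Δ.reachP σ π2 (topLang ΓT) γ = 0) :
    ∀ n (w : List (List Γ)) (c : List Γ), c ≠ [] → (∀ e ∈ w, e ≠ ([] : List Γ)) →
      (∀ m, Δ.reachN (Δ.stripS σ' γ) π1 (topLang ΓT) m w c = 0) →
      Δ.reachN σ' (Δ.combS π1 π2 γ) (topLang ΓT) n (w.map (· ++ γ)) (c ++ γ) = 0 := by
  intro n
  induction n with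
  | zero =>
    intro w c hc hw hz
    have hcT := Δ.not_mem_of_reachN_zero (hz 0)
    have : c ++ γ ∉ topLang ΓT := fun h => hcT ((topLang_append hc γ).mp h)
    simp only [BPA.reachN, if_neg this]
    exact if_neg this
  | succ n ih =>
    intro w c hc hw hz
    obtain ⟨X, β, rfl⟩ : ∃ X β, c = X :: β := by
      cases c with
      | nil => exact absurd rfl hc
      | cons X β => exact ⟨X, β, rfl⟩
    have hcT : (X :: β) ∉ topLang ΓT := Δ.not_mem_of_reachN_zero (hz 0)
    have hbT : (X :: (β ++ γ)) ∉ topLang ΓT := fun h => hcT (topLang_cons.mpr (topLang_cons.mp h))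
    show Δ.reachN σ' (Δ.combS π1 π2 γ) (topLang ΓT) (n+1) (w.map (· ++ γ)) (X :: (β ++ γ)) = 0
    rw [Δ.reachN_succ hbT]
    apply Finset.sum_eq_zero
    intro α hα
    have hag : Δ.choice σ' (Δ.combS π1 π2 γ) (w.map (· ++ γ)) (X :: (β ++ γ)) α
        = Δ.choice (Δ.stripS σ' γ) π1 w (X :: β) α :=
      Δ.choice_agree σ' (Δ.stripS σ' γ) (Δ.combS π1 π2 γ) π1 (w.map (· ++ γ)) w X (β ++ γ) β
        (fun _ => rfl)
        (fun α' => Δ.combS_f_phase1 π1 π2 γ hw (List.cons_ne_nil X β) α') α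
    rcases eq_or_lt_of_le (Δ.choice_nonneg (Δ.stripS σ' γ) π1 w (X :: β) α) with h0 | hpos
    · rw [hag, ← h0, zero_mul]
    · have hz' := Δ.allZero_step hcT hpos hz
      by_cases hnil : α ++ β = []
      · have e1 : α ++ (β ++ γ) = γ := by rw [← List.append_assoc, hnil]; rfl
        rw [e1, Δ.comb_dia_zero ΓT σ' π1 π2 γ hπ2 n _ ?_, mul_zero]
        intro e he
        rcases List.mem_append.mp he with he | he
        · exact map_entries_ne hw e he
        · rw [List.mem_singleton.mp he]
          exact append_ne (List.cons_ne_nil X β) γ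
      · have e1 : α ++ (β ++ γ) = (α ++ β) ++ γ := (List.append_assoc α β γ).symm
        have e2 : w.map (· ++ γ) ++ [X :: (β ++ γ)] = (w ++ [X :: β]).map (· ++ γ) := by
          simp only [List.map_append, List.map_cons, List.map_nil]; rfl
        have hw' : ∀ e ∈ w ++ [X :: β], e ≠ ([] : List Γ) := by
          intro e he
          rcases List.mem_append.mp he with he | he
          · exact hw e he
          · rw [List.mem_singleton.mp he]; exact List.cons_ne_nil X β
        rw [e1, e2, ih (w ++ [X :: β]) (α ++ β) hnil hw' hz', mul_zero]

/-- Core phase-1 induction for popping a Box strategy: if the stripped play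
from `c` surely avoids `T ∪ {ε}`, the lifted play from `c ++ γ` surely
avoids `T`. -/
lemma C2 (ΓT : Set Γ) (σ' : Δ.Strat Δ.isBox) (π : Δ.Strat Δ.isDiamond) (γ : List Γ) :
    ∀ n (w : List (List Γ)) (c : List Γ), c ≠ [] → (∀ e ∈ w, e ≠ ([] : List Γ)) →
      (∀ m, Δ.reachN (Δ.stripS σ' γ) π (topLang ΓT ∪ {([] : List Γ)} : Set (List Γ)) m w c = 0) →
      Δ.reachN σ' (Δ.liftS π γ) (topLang ΓT) n (w.map (· ++ γ)) (c ++ γ) = 0 := by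
  intro n
  induction n with
  | zero =>
    intro w c hc hw hz
    have hcT := Δ.not_mem_of_reachN_zero (hz 0)
    have : c ++ γ ∉ topLang ΓT := fun h => hcT (Or.inl ((topLang_append hc γ).mp h))
    simp only [BPA.reachN, if_neg this]
    exact if_neg this
  | succ n ih =>
    intro w c hc hw hz
    obtain ⟨X, β, rfl⟩ : ∃ X β, c = X :: β := by
      cases c with
      | nil => exact absurd rfl hc
      | cons X β => exact ⟨X, β, rfl⟩
    have hcTe : (X :: β) ∉ (topLang ΓT ∪ {([] : List Γ)} : Set (List Γ)) :=
      Δ.not_mem_of_reachN_zero (hz 0)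
    have hcT : (X :: β) ∉ topLang ΓT := fun h => hcTe (Or.inl h)
    have hbT : (X :: (β ++ γ)) ∉ topLang ΓT := fun h => hcT (topLang_cons.mpr (topLang_cons.mp h))
    show Δ.reachN σ' (Δ.liftS π γ) (topLang ΓT) (n+1) (w.map (· ++ γ)) (X :: (β ++ γ)) = 0
    rw [Δ.reachN_succ hbT]
    apply Finset.sum_eq_zero
    intro α hα
    have hag : Δ.choice σ' (Δ.liftS π γ) (w.map (· ++ γ)) (X :: (β ++ γ)) α
        = Δ.choice (Δ.stripS σ' γ) π w (X :: β) α :=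
      Δ.choice_agree σ' (Δ.stripS σ' γ) (Δ.liftS π γ) π (w.map (· ++ γ)) w X (β ++ γ) β
        (fun _ => rfl)
        (fun α' => Δ.liftS_f_eq π γ w (List.cons_ne_nil X β) α') α
    rcases eq_or_lt_of_le (Δ.choice_nonneg (Δ.stripS σ' γ) π w (X :: β) α) with h0 | hpos
    · rw [hag, ← h0, zero_mul]
    · have hrule : Δ.rule X α := by
        by_contra hr
        rw [Δ.choice_eq_zero hr] at hpos
        exact lt_irrefl 0 hpos
      by_cases hnil : α ++ β = []
      · exfalso
        have h1 := Δ.le_reachN_succ (σ := Δ.stripS σ' γ) (π := π)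
          (T := (topLang ΓT ∪ {([] : List Γ)} : Set (List Γ))) hrule hcTe 0 w
        rw [hz 1, hnil] at h1
        have h2 : Δ.reachN (Δ.stripS σ' γ) π (topLang ΓT ∪ {([] : List Γ)} : Set (List Γ)) 0
            (w ++ [X :: β]) [] = 1 := by
          simp only [BPA.reachN]
          have hm : ([] : List Γ) ∈ (topLang ΓT ∪ {([] : List Γ)} : Set (List Γ)) := Or.inr rfl
          rw [if_pos hm]
        rw [h2, mul_one] at h1
        exact absurd h1 (not_le.mpr hpos)
      · have hz' := Δ.allZero_step hcTe hpos hz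
        have e1 : α ++ (β ++ γ) = (α ++ β) ++ γ := (List.append_assoc α β γ).symm
        have e2 : w.map (· ++ γ) ++ [X :: (β ++ γ)] = (w ++ [X :: β]).map (· ++ γ) := by
          simp only [List.map_append, List.map_cons, List.map_nil]; rfl
        have hw' : ∀ e ∈ w ++ [X :: β], e ≠ ([] : List Γ) := by
          intro e he
          rcases List.mem_append.mp he with he | he
          · exact hw e he
          · rw [List.mem_singleton.mp he]; exact List.cons_ne_nil X β
        rw [e1, e2, ih (w ++ [X :: β]) (α ++ β) hnil hw' hz', mul_zero]

/-- Core phase-1 induction for extending a Box strategy by a junk suffix: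
if the lifted play from `c ++ γ` is surely-avoiding, so is the play from `c`. -/
lemma C3 (ΓT : Set Γ) (σ : Δ.Strat Δ.isBox) (π' : Δ.Strat Δ.isDiamond) (γ : List Γ) :
    ∀ n (w : List (List Γ)) (c : List Γ), c ≠ [] → (∀ e ∈ w, e ≠ ([] : List Γ)) →
      (∀ m, Δ.reachN (Δ.liftS σ γ) π' (topLang ΓT) m (w.map (· ++ γ)) (c ++ γ) = 0) →
      Δ.reachN σ (Δ.stripS π' γ) (topLang ΓT) n w c = 0 := by
  intro n
  induction n with
  | zero =>
    intro w c hc hw hz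
    have hbT := Δ.not_mem_of_reachN_zero (hz 0)
    have : c ∉ topLang ΓT := fun h => hbT ((topLang_append hc γ).mpr h)
    simp only [BPA.reachN, if_neg this]
    exact if_neg this
  | succ n ih =>
    intro w c hc hw hz
    obtain ⟨X, β, rfl⟩ : ∃ X β, c = X :: β := by
      cases c with
      | nil => exact absurd rfl hc
      | cons X β => exact ⟨X, β, rfl⟩
    have hbT : (X :: (β ++ γ)) ∉ topLang ΓT := Δ.not_mem_of_reachN_zero (hz 0)
    have hcT : (X :: β) ∉ topLang ΓT := fun h => hbT (topLang_cons.mpr (topLang_cons.mp h))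
    rw [Δ.reachN_succ hcT]
    apply Finset.sum_eq_zero
    intro α hα
    have hag : Δ.choice (Δ.liftS σ γ) π' (w.map (· ++ γ)) (X :: (β ++ γ)) α
        = Δ.choice σ (Δ.stripS π' γ) w (X :: β) α :=
      Δ.choice_agree (Δ.liftS σ γ) σ π' (Δ.stripS π' γ) (w.map (· ++ γ)) w X (β ++ γ) β
        (fun α' => Δ.liftS_f_eq σ γ w (List.cons_ne_nil X β) α')
        (fun _ => rfl) α
    rcases eq_or_lt_of_le (Δ.choice_nonneg σ (Δ.stripS π' γ) w (X :: β) α) with h0 | hpos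
    · rw [← h0, zero_mul]
    · have hposb : 0 < Δ.choice (Δ.liftS σ γ) π' (w.map (· ++ γ)) (X :: (β ++ γ)) α := by
        rw [hag]; exact hpos
      have hz' := Δ.allZero_step hbT hposb hz
      by_cases hnil : α ++ β = []
      · rw [hnil, Δ.reachN_nil (T := topLang ΓT)]
        exact mul_eq_zero_of_right _ (if_neg topLang_nil)
      · have e1 : α ++ (β ++ γ) = (α ++ β) ++ γ := (List.append_assoc α β γ).symm
        have e2 : w.map (· ++ γ) ++ [X :: (β ++ γ)] = (w ++ [X :: β]).map (· ++ γ) := by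
          simp only [List.map_append, List.map_cons, List.map_nil]; rfl
        have hw' : ∀ e ∈ w ++ [X :: β], e ≠ ([] : List Γ) := by
          intro e he
          rcases List.mem_append.mp he with he | he
          · exact hw e he
          · rw [List.mem_singleton.mp he]; exact List.cons_ne_nil X β
        rw [e1, e2] at hz'
        rw [ih (w ++ [X :: β]) (α ++ β) hnil hw' hz', mul_zero]

/-- Core phase-1 induction for composing Box strategies. -/
lemma C4 (ΓT : Set Γ) (σ1 σ2 : Δ.Strat Δ.isBox) (π' : Δ.Strat Δ.isDiamond) (γ : List Γ)
    (hσ2 : ∀ π, 0 < Δ.reachP σ2 π (topLang ΓT) γ) :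
    ∀ n (w : List (List Γ)) (c : List Γ), c ≠ [] → (∀ e ∈ w, e ≠ ([] : List Γ)) →
      (∀ m, Δ.reachN (Δ.combS σ1 σ2 γ) π' (topLang ΓT) m (w.map (· ++ γ)) (c ++ γ) = 0) →
      Δ.reachN σ1 (Δ.stripS π' γ) (topLang ΓT ∪ {([] : List Γ)} : Set (List Γ)) n w c = 0 := by
  intro n
  induction n with
  | zero =>
    intro w c hc hw hz
    have hbT := Δ.not_mem_of_reachN_zero (hz 0)
    have : c ∉ (topLang ΓT ∪ {([] : List Γ)} : Set (List Γ)) := by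
      rintro (h | h)
      · exact hbT ((topLang_append hc γ).mpr h)
      · exact hc h
    simp only [BPA.reachN, if_neg this]
  | succ n ih =>
    intro w c hc hw hz
    obtain ⟨X, β, rfl⟩ : ∃ X β, c = X :: β := by
      cases c with
      | nil => exact absurd rfl hc
      | cons X β => exact ⟨X, β, rfl⟩
    have hbT : (X :: (β ++ γ)) ∉ topLang ΓT := Δ.not_mem_of_reachN_zero (hz 0)
    have hcT : (X :: β) ∉ topLang ΓT := fun h => hbT (topLang_cons.mpr (topLang_cons.mp h))
    have hcTe : (X :: β) ∉ (topLang ΓT ∪ {([] : List Γ)} : Set (List Γ)) := by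
      rintro (h | h)
      · exact hcT h
      · exact List.cons_ne_nil X β h
    rw [Δ.reachN_succ hcTe]
    apply Finset.sum_eq_zero
    intro α hα
    have hag : Δ.choice (Δ.combS σ1 σ2 γ) π' (w.map (· ++ γ)) (X :: (β ++ γ)) α
        = Δ.choice σ1 (Δ.stripS π' γ) w (X :: β) α :=
      Δ.choice_agree (Δ.combS σ1 σ2 γ) σ1 π' (Δ.stripS π' γ) (w.map (· ++ γ)) w X (β ++ γ) β
        (fun α' => Δ.combS_f_phase1 σ1 σ2 γ hw (List.cons_ne_nil X β) α')
        (fun _ => rfl) α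
    rcases eq_or_lt_of_le (Δ.choice_nonneg σ1 (Δ.stripS π' γ) w (X :: β) α) with h0 | hpos
    · rw [← h0, zero_mul]
    · have hposb : 0 < Δ.choice (Δ.combS σ1 σ2 γ) π' (w.map (· ++ γ)) (X :: (β ++ γ)) α := by
        rw [hag]; exact hpos
      have hz' := Δ.allZero_step hbT hposb hz
      have hW' : ∀ e ∈ w.map (· ++ γ) ++ [X :: (β ++ γ)], e ≠ γ := by
        intro e he
        rcases List.mem_append.mp he with he | he
        · exact map_entries_ne hw e he
        · rw [List.mem_singleton.mp he]
          exact append_ne (List.cons_ne_nil X β) γ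
      by_cases hnil : α ++ β = []
      · exfalso
        have e1 : α ++ (β ++ γ) = γ := by rw [← List.append_assoc, hnil]; rfl
        rw [e1] at hz'
        obtain ⟨m, hm⟩ := Δ.comb_box_ex ΓT σ1 σ2 π' γ hσ2 _ hW'
        exact hm (hz' m)
      · have e1 : α ++ (β ++ γ) = (α ++ β) ++ γ := (List.append_assoc α β γ).symm
        have e2 : w.map (· ++ γ) ++ [X :: (β ++ γ)] = (w ++ [X :: β]).map (· ++ γ) := by
          simp only [List.map_append, List.map_cons, List.map_nil]; rfl
        have hw' : ∀ e ∈ w ++ [X :: β], e ≠ ([] : List Γ) := by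
          intro e he
          rcases List.mem_append.mp he with he | he
          · exact hw e he
          · rw [List.mem_singleton.mp he]; exact List.cons_ne_nil X β
        rw [e1, e2] at hz'
        rw [ih (w ++ [X :: β]) (α ++ β) hnil hw' hz', mul_zero]

end BPA
namespace BPA

variable {Γ : Type*} [Fintype Γ] (Δ : BPA Γ)

lemma WDia_nil (ΓT : Set Γ) : ([] : List Γ) ∈ Δ.WDiaZero (topLang ΓT) := by
  refine ⟨Δ.dflt Δ.isDiamond, fun σ => (Δ.reachP_eq_zero_iff _ _ _ _).mpr fun n => ?_⟩
  rw [Δ.reachN_nil (T := topLang ΓT)]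
  exact if_neg topLang_nil

lemma WDia_cons (ΓT : Set Γ) {X : Γ} {γ : List Γ}
    (hX : [X] ∈ Δ.WDiaZero (topLang ΓT)) (hγ : γ ∈ Δ.WDiaZero (topLang ΓT)) :
    (X :: γ) ∈ Δ.WDiaZero (topLang ΓT) := by
  obtain ⟨π1, h1⟩ := hX
  obtain ⟨π2, h2⟩ := hγ
  refine ⟨Δ.combS π1 π2 γ, fun σ' => (Δ.reachP_eq_zero_iff _ _ _ _).mpr fun n => ?_⟩
  exact Δ.C1 ΓT σ' π1 π2 γ h2 n [] [X] (List.cons_ne_nil X [])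
    (fun e he => absurd he List.not_mem_nil)
    (fun m => (Δ.reachP_eq_zero_iff _ _ _ _).mp (h1 (Δ.stripS σ' γ)) m)

lemma WBox_pop (ΓT : Set Γ) {X : Γ} {γ : List Γ}
    (h : (X :: γ) ∈ Δ.WBoxPos (topLang ΓT)) :
    [X] ∈ Δ.WBoxPos (topLang ΓT ∪ {([] : List Γ)} : Set (List Γ)) := by
  obtain ⟨σ', hσ'⟩ := h
  refine ⟨Δ.stripS σ' γ, fun π => ?_⟩
  by_contra hnp
  have h0 : Δ.reachP (Δ.stripS σ' γ) π (topLang ΓT ∪ {([] : List Γ)} : Set (List Γ)) [X] = 0 :=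
    le_antisymm (not_lt.mp hnp) (Δ.reachP_nonneg _ _ _ _)
  have hz := (Δ.reachP_eq_zero_iff _ _ _ _).mp h0
  have hbig : ∀ n, Δ.reachN σ' (Δ.liftS π γ) (topLang ΓT) n [] (X :: γ) = 0 := fun n =>
    Δ.C2 ΓT σ' π γ n [] [X] (List.cons_ne_nil X [])
      (fun e he => absurd he List.not_mem_nil) hz
  have := hσ' (Δ.liftS π γ)
  rw [(Δ.reachP_eq_zero_iff _ _ _ _).mpr hbig] at this
  exact lt_irrefl 0 this

lemma WBox_ext (ΓT : Set Γ) {X : Γ} (h : [X] ∈ Δ.WBoxPos (topLang ΓT)) (γ : List Γ) :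
    (X :: γ) ∈ Δ.WBoxPos (topLang ΓT) := by
  obtain ⟨σ, hσ⟩ := h
  refine ⟨Δ.liftS σ γ, fun π' => ?_⟩
  by_contra hnp
  have h0 : Δ.reachP (Δ.liftS σ γ) π' (topLang ΓT) (X :: γ) = 0 :=
    le_antisymm (not_lt.mp hnp) (Δ.reachP_nonneg _ _ _ _)
  have hz := (Δ.reachP_eq_zero_iff _ _ _ _).mp h0
  have hsmall : ∀ n, Δ.reachN σ (Δ.stripS π' γ) (topLang ΓT) n [] [X] = 0 := fun n =>
    Δ.C3 ΓT σ π' γ n [] [X] (List.cons_ne_nil X [])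
      (fun e he => absurd he List.not_mem_nil) hz
  have := hσ (Δ.stripS π' γ)
  rw [(Δ.reachP_eq_zero_iff _ _ _ _).mpr hsmall] at this
  exact lt_irrefl 0 this

lemma WBox_comp (ΓT : Set Γ) {X : Γ} {γ : List Γ}
    (h1 : [X] ∈ Δ.WBoxPos (topLang ΓT ∪ {([] : List Γ)} : Set (List Γ)))
    (h2 : γ ∈ Δ.WBoxPos (topLang ΓT)) : (X :: γ) ∈ Δ.WBoxPos (topLang ΓT) := by
  obtain ⟨σ1, hσ1⟩ := h1
  obtain ⟨σ2, hσ2⟩ := h2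
  refine ⟨Δ.combS σ1 σ2 γ, fun π' => ?_⟩
  by_contra hnp
  have h0 : Δ.reachP (Δ.combS σ1 σ2 γ) π' (topLang ΓT) (X :: γ) = 0 :=
    le_antisymm (not_lt.mp hnp) (Δ.reachP_nonneg _ _ _ _)
  have hz := (Δ.reachP_eq_zero_iff _ _ _ _).mp h0
  have hsmall : ∀ n, Δ.reachN σ1 (Δ.stripS π' γ)
      (topLang ΓT ∪ {([] : List Γ)} : Set (List Γ)) n [] [X] = 0 := fun n =>
    Δ.C4 ΓT σ1 σ2 π' γ hσ2 n [] [X] (List.cons_ne_nil X [])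
      (fun e he => absurd he List.not_mem_nil) hz
  have := hσ1 (Δ.stripS π' γ)
  rw [(Δ.reachP_eq_zero_iff _ _ _ _).mpr hsmall] at this
  exact lt_irrefl 0 this

lemma disjW {T' : Set (List Γ)} {c : List Γ}
    (h1 : c ∈ Δ.WBoxPos T') (h2 : c ∈ Δ.WDiaZero T') : False := by
  obtain ⟨σ, hσ⟩ := h1
  obtain ⟨π, hπ⟩ := h2
  have := hσ π
  rw [hπ σ] at this
  exact lt_irrefl 0 this

lemma prependDia (ΓT : Set Γ) :
    ∀ (u : List Γ) (d : List Γ), (∀ x ∈ u, [x] ∈ Δ.WDiaZero (topLang ΓT)) →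
      d ∈ Δ.WDiaZero (topLang ΓT) → (u ++ d) ∈ Δ.WDiaZero (topLang ΓT) := by
  intro u
  induction u with
  | nil => intro d _ hd; exact hd
  | cons X t ih =>
    intro d hu hd
    exact Δ.WDia_cons ΓT (hu X List.mem_cons_self)
      (ih d (fun x hx => hu x (List.mem_cons_of_mem X hx)) hd)

lemma prependBox (ΓT : Set Γ) :
    ∀ (u : List Γ) (d : List Γ),
      (∀ x ∈ u, [x] ∈ Δ.WBoxPos (topLang ΓT ∪ {([] : List Γ)} : Set (List Γ))) →
      d ∈ Δ.WBoxPos (topLang ΓT) → (u ++ d) ∈ Δ.WBoxPos (topLang ΓT) := by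
  intro u
  induction u with
  | nil => intro d _ hd; exact hd
  | cons X t ih =>
    intro d hu hd
    exact Δ.WBox_comp ΓT (hu X List.mem_cons_self)
      (ih d (fun x hx => hu x (List.mem_cons_of_mem X hx)) hd)

omit [Fintype Γ] in
lemma firstBad {S : Set Γ} :
    ∀ c : List Γ, (¬ ∀ x ∈ c, x ∈ S) →
      ∃ u Y v, c = u ++ Y :: v ∧ (∀ x ∈ u, x ∈ S) ∧ Y ∉ S := by
  intro c
  induction c with
  | nil => intro h; exact absurd (fun x hx => absurd hx List.not_mem_nil) h
  | cons X t ih =>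
    intro h
    by_cases hX : X ∈ S
    · have ht : ¬ ∀ x ∈ t, x ∈ S := fun h' =>
        h (fun x hx => (List.mem_cons.mp hx).elim (fun e => e ▸ hX) (h' x))
      obtain ⟨u, Y, v, heq, hu, hY⟩ := ih ht
      exact ⟨X :: u, Y, v, by rw [heq]; rfl,
        fun x hx => (List.mem_cons.mp hx).elim (fun e => e ▸ hX) (hu x), hY⟩
    · exact ⟨[], X, t, rfl, fun x hx => absurd hx List.not_mem_nil, hX⟩

omit [Fintype Γ] in
lemma flatten_map_singleton : ∀ c : List Γ, (c.map fun x => [x]).flatten = c := by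
  intro c; induction c <;> simp_all

omit [Fintype Γ] in
lemma mem_symLang_kstar {S : Set Γ} {c : List Γ} :
    c ∈ (KStar.kstar (symLang S) : Language Γ) ↔ ∀ x ∈ c, x ∈ S := by
  rw [Language.mem_kstar]
  constructor
  · rintro ⟨L, rfl, hL⟩ x hx
    obtain ⟨l, hl, hxl⟩ := List.mem_flatten.mp hx
    obtain ⟨X, hX, rfl⟩ := hL l hl
    rw [List.mem_singleton] at hxl
    exact hxl ▸ hX
  · intro h
    refine ⟨c.map (fun x => [x]), (flatten_map_singleton c).symm, ?_⟩
    rintro y hy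
    obtain ⟨x, hx, rfl⟩ := List.mem_map.mp hy
    exact ⟨x, h x hx, rfl⟩

omit [Fintype Γ] in
lemma mem_RHS2 {A B : Set Γ} {c : List Γ} :
    c ∈ (KStar.kstar (symLang (B \ A)) * symLang (Set.univ \ B) * (⊤ : Language Γ)) ↔
      ∃ u Y v, c = u ++ Y :: v ∧ (∀ x ∈ u, x ∈ B \ A) ∧ Y ∉ B := by
  rw [Language.mem_mul]
  constructor
  · rintro ⟨a, ha, b, -, rfl⟩
    rw [Language.mem_mul] at ha
    obtain ⟨u, hu, s, hs, rfl⟩ := ha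
    obtain ⟨Y, hY, rfl⟩ := hs
    exact ⟨u, Y, b, by simp, fun x hx => mem_symLang_kstar.mp hu x hx, hY.2⟩
  · rintro ⟨u, Y, v, rfl, hu, hY⟩
    refine ⟨u ++ [Y], ?_, v, trivial, by simp⟩
    rw [Language.mem_mul]
    exact ⟨u, mem_symLang_kstar.mpr hu, [Y], ⟨Y, ⟨trivial, hY⟩, rfl⟩, rfl⟩

end BPA

/-- `W_Diamond(T,=0) = (B∖A)* ∪ (B∖A)*(Γ∖B)Γ*` where `A = W_Box(T,>0) ∩ Γ`
and `B = W_Box(T_ε,>0) ∩ Γ`, assuming determinacy. -/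
theorem WDiaZero_eq {Γ : Type*} [Fintype Γ] (Δ : BPA Γ) (ΓT : Set Γ)
    (A B : Set Γ)
    (hA : A = {X | [X] ∈ Δ.WBoxPos (topLang ΓT)})
    (hB : B = {X | [X] ∈ Δ.WBoxPos (topLang ΓT ∪ {([] : List Γ)})})
    (hdet : ∀ c : List Γ, c ∈ Δ.WBoxPos (topLang ΓT) ∨ c ∈ Δ.WDiaZero (topLang ΓT)) :
    (Δ.WDiaZero (topLang ΓT) : Language Γ)
        = KStar.kstar (symLang (B \ A)) +
          KStar.kstar (symLang (B \ A)) * symLang (Set.univ \ B) * (⊤ : Language Γ) := by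
  apply Set.ext
  intro c
  have hiff : (c ∈ KStar.kstar (symLang (B \ A)) +
        KStar.kstar (symLang (B \ A)) * symLang (Set.univ \ B) * (⊤ : Language Γ)) ↔
      ((∀ x ∈ c, x ∈ B \ A) ∨
        ∃ u Y v, c = u ++ Y :: v ∧ (∀ x ∈ u, x ∈ B \ A) ∧ Y ∉ B) := by
    rw [Language.mem_add, BPA.mem_symLang_kstar, BPA.mem_RHS2]
  constructor
  · -- W_Diamond(=0) ⊆ RHS
    intro hc
    apply hiff.mpr
    by_contra hR
    push_neg at hR
    obtain ⟨h1, h2⟩ := hR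
    have h1' : ¬ ∀ x ∈ c, x ∈ B \ A := by
      obtain ⟨x, hx, hxn⟩ := h1
      exact fun hall => hxn (hall x hx)
    obtain ⟨u, Y, v, heq, hu, hY⟩ := BPA.firstBad c h1'

    have hYB : Y ∈ B := h2 u Y v heq hu
    have hYA : Y ∈ A := by
      by_contra hA'
      exact hY ⟨hYB, hA'⟩
    have h3 : [Y] ∈ Δ.WBoxPos (topLang ΓT) := by rw [hA] at hYA; exact hYA
    have h4 : (Y :: v) ∈ Δ.WBoxPos (topLang ΓT) := Δ.WBox_ext ΓT h3 v
    have h5 : ∀ x ∈ u, [x] ∈ Δ.WBoxPos (topLang ΓT ∪ {([] : List Γ)} : Set (List Γ)) := by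
      intro x hx
      have := (hu x hx).1
      rw [hB] at this
      exact this
    have h6 : u ++ Y :: v ∈ Δ.WBoxPos (topLang ΓT) := Δ.prependBox ΓT u (Y :: v) h5 h4
    rw [heq] at hc
    exact Δ.disjW h6 hc
  · -- RHS ⊆ W_Diamond(=0)
    intro hc
    replace hc := hiff.mp hc
    have hDia : ∀ x : Γ, x ∉ A → [x] ∈ Δ.WDiaZero (topLang ΓT) := by
      intro x hxA
      rcases hdet [x] with h | h
      · exact absurd (by rw [hA]; exact h) hxA
      · exact h
    rcases hc with hall | ⟨u, Y, v, rfl, hu, hYB⟩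
    · have h5 : ∀ x ∈ c, [x] ∈ Δ.WDiaZero (topLang ΓT) := fun x hx => hDia x (hall x hx).2
      have := Δ.prependDia ΓT c [] h5 (Δ.WDia_nil ΓT)
      rwa [List.append_nil] at this
    · have hYv : (Y :: v) ∈ Δ.WDiaZero (topLang ΓT) := by
        rcases hdet (Y :: v) with h | h
        · exfalso
          apply hYB
          rw [hB]
          exact Δ.WBox_pop ΓT h
        · exact h
      have h5 : ∀ x ∈ u, [x] ∈ Δ.WDiaZero (topLang ΓT) := fun x hx => hDia x (hu x hx).2
      exact Δ.prependDia ΓT u (Y :: v) h5 hYv
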